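/- Let (X_s, ‖·‖_s)_{s∈Ω} be a measurable Banach fiber bundle and 1 ≤ p < ∞. Then the L^p-fiber space L^p(Ω,(X_s)_{s∈Ω}) is a Banach space with respect to the L^p-fiber norm ‖f‖_p = (∫_Ω ‖f(s)‖_s^p dμ(s))^{1/p}; that is, it is a normed vector space which is complete. -/

import Mathlib

open MeasureTheory Filter
open scoped ENNReal NNReal

noncomputable section

/-- `R` is the resolvent operator of the (possibly unbounded) operator `A` at `lam`. -/
def IsResolvent {X : Type*} [NormedAddCommGroup X] [NormedSpace ℂ X]
    (A : X →ₗ.[ℂ] X) (lam : ℂ) (R : X →L[ℂ] X) : Prop :=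
  ∃ hR : ∀ x : X, R x ∈ A.domain,
    (∀ x : X, lam • R x - A ⟨R x, hR x⟩ = x) ∧
    ∀ y : A.domain, R (lam • (y : X) - A y) = y

def InResolventSet {X : Type*} [NormedAddCommGroup X] [NormedSpace ℂ X]
    (A : X →ₗ.[ℂ] X) (lam : ℂ) : Prop :=
  ∃ R : X →L[ℂ] X, IsResolvent A lam R

def IsBoundedInverse {X : Type*} [NormedAddCommGroup X] [NormedSpace ℂ X]
    (A : X →ₗ.[ℂ] X) (B : X →L[ℂ] X) : Prop :=
  ∃ hB : ∀ x : X, B x ∈ A.domain,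
    (∀ x : X, A ⟨B x, hB x⟩ = x) ∧ ∀ y : A.domain, B (A y) = y

/-- `𝓜` is the operator-valued multiplication operator on `L^p(Ω,X)` with fibers `M s`. -/
def IsMulOp {Ω : Type*} [MeasurableSpace Ω] (μ : Measure Ω)
    {X : Type*} [NormedAddCommGroup X] [NormedSpace ℂ X] (p : ℝ≥0∞) [Fact (1 ≤ p)]
    (M : Ω → X →ₗ.[ℂ] X) (𝓜 : Lp X p μ →ₗ.[ℂ] Lp X p μ) : Prop :=
  (∀ f : Lp X p μ, f ∈ 𝓜.domain ↔
    ∃ g : Lp X p μ, ∀ᵐ s ∂μ, ∃ h : f s ∈ (M s).domain, g s = M s ⟨f s, h⟩) ∧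
  ∀ f : 𝓜.domain, ∀ᵐ s ∂μ, ∃ h : (f : Lp X p μ) s ∈ (M s).domain,
    (𝓜 f) s = M s ⟨(f : Lp X p μ) s, h⟩

def IsC0Semigroup {Y : Type*} [NormedAddCommGroup Y] [NormedSpace ℂ Y]
    (T : ℝ → Y →L[ℂ] Y) : Prop :=
  T 0 = 1 ∧ (∀ t r : ℝ, 0 ≤ t → 0 ≤ r → T (t + r) = T t ∘L T r) ∧
  ∀ y : Y, ContinuousOn (fun t => T t y) (Set.Ici (0 : ℝ))

def IsGenerator {Y : Type*} [NormedAddCommGroup Y] [NormedSpace ℂ Y]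
    (T : ℝ → Y →L[ℂ] Y) (A : Y →ₗ.[ℂ] Y) : Prop :=
  (∀ y : Y, y ∈ A.domain ↔
    ∃ z : Y, Tendsto (fun t : ℝ => t⁻¹ • (T t y - y)) (nhdsWithin 0 (Set.Ioi 0)) (nhds z)) ∧
  ∀ y : A.domain, Tendsto (fun t : ℝ => t⁻¹ • (T t (y : Y) - (y : Y)))
    (nhdsWithin 0 (Set.Ioi 0)) (nhds (A y))

/-- A function `f` into the fibers of a measurable Banach fiber bundle is *fiber measurable*
(w.r.t. the countable generating family `b k`, the fiberwise images of the set `B`) if it is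
`μ`-a.e. the pointwise limit of measurable simple functions with values in `B`. -/
def FiberMeasurable {Ω : Type*} [MeasurableSpace Ω] {Xf : Ω → Type*}
    [∀ s, NormedAddCommGroup (Xf s)]
    (μ : MeasureTheory.Measure Ω) (b : ℕ → ∀ s, Xf s) (f : ∀ s, Xf s) : Prop :=
  ∃ k : ℕ → Ω → ℕ, (∀ j, Measurable (k j) ∧ (Set.range (k j)).Finite) ∧
    ∀ᵐ s ∂μ, Filter.Tendsto (fun j => b (k j s) s) Filter.atTop (nhds (f s))

/-- A fiber measurable function is *fiber `p`-integrable* if `∫ ‖f(s)‖_s^p dμ(s) < ∞`. -/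
def FiberPIntegrable {Ω : Type*} [MeasurableSpace Ω] {Xf : Ω → Type*}
    [∀ s, NormedAddCommGroup (Xf s)]
    (μ : MeasureTheory.Measure Ω) (b : ℕ → ∀ s, Xf s) (p : ℝ) (f : ∀ s, Xf s) : Prop :=
  FiberMeasurable μ b f ∧ (∫⁻ s, ENNReal.ofReal (‖f s‖ ^ p) ∂μ) < ⊤

/-- The countable family `b k` presents a measurable Banach fiber bundle `(X_s)_{s∈Ω}`:
the norms `s ↦ ‖b_k‖_s` are measurable, the family is fiberwise a `ℚ+iℚ`-vector space, and
fiberwise dense (the fiber `X_s` is the completion of `B/N_s`). -/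
def IsFiberBasis {Ω : Type*} [MeasurableSpace Ω] {Xf : Ω → Type*}
    [∀ s, NormedAddCommGroup (Xf s)] [∀ s, NormedSpace ℂ (Xf s)]
    (b : ℕ → ∀ s, Xf s) : Prop :=
  (∀ k, Measurable fun s => ‖b k s‖) ∧
  (∃ k₀, ∀ s, b k₀ s = 0) ∧
  (∀ k l, ∃ m, ∀ s, b m s = b k s + b l s) ∧
  (∀ (q r : ℚ) (k : ℕ), ∃ m, ∀ s, b m s = ((q : ℂ) + (r : ℂ) * Complex.I) • b k s) ∧
  ∀ s, DenseRange fun k => b k s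


section FiberHelpers

variable {Ω : Type*} [MeasurableSpace Ω] {μ : Measure Ω}
  {Xf : Ω → Type*} [∀ s, NormedAddCommGroup (Xf s)]
  {b : ℕ → ∀ s, Xf s}

theorem meas_norm_comp (hb1 : ∀ k, Measurable fun s => ‖b k s‖)
    {k : Ω → ℕ} (hk : Measurable k) : Measurable fun s => ‖b (k s) s‖ := by
  have : Measurable (fun q : Ω × ℕ => ‖b q.2 q.1‖) :=
    measurable_from_prod_countable_left (fun n => hb1 n)
  exact this.comp (measurable_id.prodMk hk)

theorem meas_nat_comp2 {k l : Ω → ℕ} (hk : Measurable k) (hl : Measurable l)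
    (g : ℕ → ℕ → ℕ) : Measurable fun s => g (k s) (l s) :=
  (measurable_of_countable (fun q : ℕ × ℕ => g q.1 q.2)).comp (hk.prodMk hl)

/-- Distance to a basis vector is a.e.-measurable for fiber measurable functions. -/
theorem fm_dist_aemeasurable (hb1 : ∀ k, Measurable fun s => ‖b k s‖)
    {bsub : ℕ → ℕ → ℕ} (hbsub : ∀ k l s, b (bsub k l) s = b k s - b l s)
    {f : ∀ s, Xf s} (hf : FiberMeasurable μ b f) (m : ℕ) :
    AEMeasurable (fun s => ‖f s - b m s‖) μ := by
  obtain ⟨k, hk, hconv⟩ := hf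
  apply aemeasurable_of_tendsto_metrizable_ae atTop
    (f := fun j s => ‖b (k j s) s - b m s‖)
  · intro j
    have : Measurable fun s => ‖b (bsub (k j s) m) s‖ :=
      meas_norm_comp hb1 (meas_nat_comp2 (hk j).1 measurable_const bsub)
    simpa only [hbsub] using this.aemeasurable
  · filter_upwards [hconv] with s hs
    exact (hs.sub tendsto_const_nhds).norm

theorem fm_norm_aemeasurable (hb1 : ∀ k, Measurable fun s => ‖b k s‖)
    {k₀ : ℕ} (hk₀ : ∀ s, b k₀ s = 0)
    {bsub : ℕ → ℕ → ℕ} (hbsub : ∀ k l s, b (bsub k l) s = b k s - b l s)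
    {f : ∀ s, Xf s} (hf : FiberMeasurable μ b f) :
    AEMeasurable (fun s => ‖f s‖) μ := by
  have := fm_dist_aemeasurable hb1 hbsub hf k₀
  simpa only [hk₀, sub_zero] using this

/-- Converse: a.e.-measurable distances to all basis vectors imply fiber measurability. -/
theorem fiberMeasurable_of_dist (hb5 : ∀ s, DenseRange fun k => b k s)
    {f : ∀ s, Xf s} (h : ∀ m, AEMeasurable (fun s => ‖f s - b m s‖) μ) :
    FiberMeasurable μ b f := by
  classical
  set d : ℕ → Ω → ℝ := fun m => (h m).mk _ with hd_def
  have hd_meas : ∀ m, Measurable (d m) := fun m => (h m).measurable_mk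
  have hd_ae : ∀ᵐ s ∂μ, ∀ m, ‖f s - b m s‖ = d m s := by
    rw [ae_all_iff]; exact fun m => (h m).ae_eq_mk
  have hex : ∀ (j : ℕ) (s : Ω), ∃ m, m ≤ j ∧ ∀ i ≤ j, d m s ≤ d i s := by
    intro j s
    obtain ⟨m, hmem, hmin⟩ := (Finset.range (j + 1)).exists_min_image (fun m => d m s)
      ⟨0, Finset.mem_range.2 (Nat.succ_pos j)⟩
    exact ⟨m, Nat.lt_succ_iff.1 (Finset.mem_range.1 hmem),
      fun i hi => hmin i (Finset.mem_range.2 (Nat.lt_succ_iff.2 hi))⟩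
  refine ⟨fun j s => Nat.find (hex j s), fun j => ⟨?_, ?_⟩, ?_⟩
  · apply measurable_find
    intro m
    by_cases hmj : m ≤ j
    · have : {s : Ω | m ≤ j ∧ ∀ i ≤ j, d m s ≤ d i s}
          = ⋂ i ∈ Finset.range (j + 1), {s : Ω | d m s ≤ d i s} := by
        ext s; simp [hmj, Nat.lt_succ_iff]
      rw [this]
      exact MeasurableSet.biInter (Finset.range (j + 1)).countable_toSet
        (fun i _ => measurableSet_le (hd_meas m) (hd_meas i))
    · have : {s : Ω | m ≤ j ∧ ∀ i ≤ j, d m s ≤ d i s} = ∅ := by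
        ext s; simp [hmj]
      rw [this]; exact MeasurableSet.empty
  · apply (Set.finite_Iic j).subset
    rintro _ ⟨s, rfl⟩
    exact (Nat.find_spec (hex j s)).1
  · filter_upwards [hd_ae] with s hs
    rw [Metric.tendsto_atTop]
    intro ε hε
    obtain ⟨m₀, hm₀⟩ := (hb5 s).exists_dist_lt (f s) hε
    refine ⟨m₀, fun j hj => ?_⟩
    have hspec := Nat.find_spec (hex j s)
    have h1 : d (Nat.find (hex j s)) s ≤ d m₀ s := hspec.2 m₀ hj
    have h2 : ‖f s - b (Nat.find (hex j s)) s‖ ≤ ‖f s - b m₀ s‖ := by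
      rw [hs, hs]; exact h1
    calc dist (b (Nat.find (hex j s)) s) (f s)
        = ‖f s - b (Nat.find (hex j s)) s‖ := by rw [dist_eq_norm, norm_sub_rev]
      _ ≤ ‖f s - b m₀ s‖ := h2
      _ = dist (f s) (b m₀ s) := (dist_eq_norm _ _).symm
      _ < ε := hm₀

/-- Fiber measurability is closed under a.e. pointwise limits. -/
theorem fiberMeasurable_of_tendsto (hb1 : ∀ k, Measurable fun s => ‖b k s‖)
    {bsub : ℕ → ℕ → ℕ} (hbsub : ∀ k l s, b (bsub k l) s = b k s - b l s)
    (hb5 : ∀ s, DenseRange fun k => b k s)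
    {f : ∀ s, Xf s} {F : ℕ → ∀ s, Xf s} (hF : ∀ n, FiberMeasurable μ b (F n))
    (hlim : ∀ᵐ s ∂μ, Tendsto (fun n => F n s) atTop (nhds (f s))) :
    FiberMeasurable μ b f := by
  apply fiberMeasurable_of_dist hb5
  intro m
  apply aemeasurable_of_tendsto_metrizable_ae atTop
    (f := fun n s => ‖F n s - b m s‖)
  · exact fun n => fm_dist_aemeasurable hb1 hbsub (hF n) m
  · filter_upwards [hlim] with s hs
    exact (hs.sub tendsto_const_nhds).norm

/-- Fiber measurability is closed under addition. -/
theorem FiberMeasurable.add' {badd : ℕ → ℕ → ℕ}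
    (hbadd : ∀ k l s, b (badd k l) s = b k s + b l s)
    {f g : ∀ s, Xf s} (hf : FiberMeasurable μ b f) (hg : FiberMeasurable μ b g) :
    FiberMeasurable μ b (fun s => f s + g s) := by
  obtain ⟨k, hk, hkc⟩ := hf
  obtain ⟨l, hl, hlc⟩ := hg
  refine ⟨fun j s => badd (k j s) (l j s), fun j =>
    ⟨meas_nat_comp2 (hk j).1 (hl j).1 badd, ?_⟩, ?_⟩
  · apply (Set.Finite.image2 badd (hk j).2 (hl j).2).subset
    rintro _ ⟨s, rfl⟩
    exact Set.mem_image2_of_mem ⟨s, rfl⟩ ⟨s, rfl⟩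
  · filter_upwards [hkc, hlc] with s hks hls
    simpa only [hbadd] using hks.add hls

theorem exists_rat_seq_tendsto (c : ℂ) :
    ∃ q r : ℕ → ℚ, Tendsto (fun j => ((q j : ℂ) + (r j : ℂ) * Complex.I)) atTop (nhds c) := by
  have key : ∀ x : ℝ, ∃ q : ℕ → ℚ, Tendsto (fun j => ((q j : ℝ))) atTop (nhds x) := by
    intro x
    have h : ∀ j : ℕ, ∃ q : ℚ, |x - q| < 1 / (j + 1) :=
      fun j => exists_rat_near x (by positivity)
    choose q hq using h
    refine ⟨q, tendsto_iff_dist_tendsto_zero.2 ?_⟩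
    apply squeeze_zero (fun j => dist_nonneg) (fun j => ?_) tendsto_one_div_add_atTop_nhds_zero_nat
    rw [dist_comm, Real.dist_eq]
    exact (hq j).le
  obtain ⟨q, hq⟩ := key c.re
  obtain ⟨r, hr⟩ := key c.im
  refine ⟨q, r, ?_⟩
  have hq' : Tendsto (fun j => ((q j : ℂ))) atTop (nhds (c.re : ℂ)) :=
    (Complex.continuous_ofReal.tendsto _).comp hq
  have hr' : Tendsto (fun j => ((r j : ℂ))) atTop (nhds (c.im : ℂ)) :=
    (Complex.continuous_ofReal.tendsto _).comp hr
  have := hq'.add (hr'.mul (tendsto_const_nhds (x := Complex.I)))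
  simpa only [Complex.re_add_im] using this

end FiberHelpers

section FiberHelpers2

variable {Ω : Type*} [MeasurableSpace Ω] {μ : Measure Ω}
  {Xf : Ω → Type*} [∀ s, NormedAddCommGroup (Xf s)] [∀ s, NormedSpace ℂ (Xf s)]
  {b : ℕ → ∀ s, Xf s}

/-- Closure of fiber measurability under scalar multiplication. -/
theorem FiberMeasurable.smul' {bsm : ℚ → ℚ → ℕ → ℕ}
    (hbsm : ∀ (q r : ℚ) (k : ℕ) (s : Ω),
      b (bsm q r k) s = ((q : ℂ) + (r : ℂ) * Complex.I) • b k s)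
    (c : ℂ) {f : ∀ s, Xf s} (hf : FiberMeasurable μ b f) :
    FiberMeasurable μ b (fun s => c • f s) := by
  obtain ⟨q, r, hqr⟩ := exists_rat_seq_tendsto c
  obtain ⟨k, hk, hkc⟩ := hf
  refine ⟨fun j s => bsm (q j) (r j) (k j s), fun j =>
    ⟨(measurable_of_countable (bsm (q j) (r j))).comp (hk j).1, ?_⟩, ?_⟩
  · apply ((hk j).2.image (bsm (q j) (r j))).subset
    rintro _ ⟨s, rfl⟩
    exact ⟨k j s, ⟨s, rfl⟩, rfl⟩
  · filter_upwards [hkc] with s hs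
    simpa only [hbsm] using hqr.smul hs

end FiberHelpers2

section ENNRealHelpers

theorem ennreal_add_rpow_le {a c : ℝ≥0∞} {p : ℝ} (hp : 0 ≤ p) :
    (a + c) ^ p ≤ 2 ^ p * (a ^ p + c ^ p) := by
  calc (a + c) ^ p ≤ (2 * (a ⊔ c)) ^ p := by
        apply ENNReal.rpow_le_rpow _ hp
        rw [two_mul]
        exact add_le_add le_sup_left le_sup_right
    _ = 2 ^ p * (a ⊔ c) ^ p := ENNReal.mul_rpow_of_nonneg _ _ hp
    _ ≤ 2 ^ p * (a ^ p + c ^ p) := by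
        apply mul_le_mul_right
        rcases le_total a c with h | h
        · rw [sup_eq_right.2 h]; exact le_add_self
        · rw [sup_eq_left.2 h]; exact self_le_add_right _ _

theorem ofReal_norm_rpow {X : Type*} [NormedAddCommGroup X] (x : X) {p : ℝ} (hp : 0 ≤ p) :
    ENNReal.ofReal (‖x‖ ^ p) = ENNReal.ofReal ‖x‖ ^ p :=
  (ENNReal.ofReal_rpow_of_nonneg (norm_nonneg x) hp).symm

theorem ofReal_norm_add_rpow_le {X : Type*} [NormedAddCommGroup X] (x y : X) {p : ℝ}
    (hp : 0 ≤ p) : ENNReal.ofReal (‖x + y‖ ^ p)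
      ≤ 2 ^ p * (ENNReal.ofReal (‖x‖ ^ p) + ENNReal.ofReal (‖y‖ ^ p)) := by
  rw [ofReal_norm_rpow _ hp, ofReal_norm_rpow _ hp, ofReal_norm_rpow _ hp]
  calc ENNReal.ofReal ‖x + y‖ ^ p
      ≤ (ENNReal.ofReal ‖x‖ + ENNReal.ofReal ‖y‖) ^ p := by
        apply ENNReal.rpow_le_rpow _ hp
        rw [← ENNReal.ofReal_add (norm_nonneg _) (norm_nonneg _)]
        exact ENNReal.ofReal_le_ofReal (norm_add_le _ _)
    _ ≤ 2 ^ p * (ENNReal.ofReal ‖x‖ ^ p + ENNReal.ofReal ‖y‖ ^ p) :=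
        ennreal_add_rpow_le hp

variable {Ω : Type*} [MeasurableSpace Ω] {μ : Measure Ω}
  {Xf : Ω → Type*} [∀ s, NormedAddCommGroup (Xf s)]

theorem lint_rpow_add_lt_top (f g : ∀ s, Xf s) {p : ℝ} (hp : 0 ≤ p)
    (hf : AEMeasurable (fun s => ‖f s‖) μ)
    (hfi : (∫⁻ s, ENNReal.ofReal (‖f s‖ ^ p) ∂μ) < ⊤)
    (hgi : (∫⁻ s, ENNReal.ofReal (‖g s‖ ^ p) ∂μ) < ⊤) :
    (∫⁻ s, ENNReal.ofReal (‖f s + g s‖ ^ p) ∂μ) < ⊤ := by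
  calc (∫⁻ s, ENNReal.ofReal (‖f s + g s‖ ^ p) ∂μ)
      ≤ ∫⁻ s, 2 ^ p * (ENNReal.ofReal (‖f s‖ ^ p) + ENNReal.ofReal (‖g s‖ ^ p)) ∂μ :=
        lintegral_mono (fun s => ofReal_norm_add_rpow_le (f s) (g s) hp)
    _ = 2 ^ p * ∫⁻ s, ENNReal.ofReal (‖f s‖ ^ p) + ENNReal.ofReal (‖g s‖ ^ p) ∂μ :=
        lintegral_const_mul' _ _ (ENNReal.rpow_ne_top_of_nonneg hp ENNReal.ofNat_ne_top)
    _ = 2 ^ p * ((∫⁻ s, ENNReal.ofReal (‖f s‖ ^ p) ∂μ)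
          + ∫⁻ s, ENNReal.ofReal (‖g s‖ ^ p) ∂μ) := by
        rw [lintegral_add_left']
        exact (hf.pow_const p).ennreal_ofReal
    _ < ⊤ := by
        apply ENNReal.mul_lt_top
        · exact ENNReal.rpow_lt_top_of_nonneg hp ENNReal.ofNat_ne_top
        · exact ENNReal.add_lt_top.2 ⟨hfi, hgi⟩

/-- Chebyshev-type estimate for the fast Cauchy subsequence. -/
theorem cheb_estimate (d : Ω → ℝ) (_hd0 : ∀ s, 0 ≤ d s) {p : ℝ} (hp : 1 ≤ p) (k : ℕ)
    (hm : AEMeasurable d μ)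
    (hI : (∫⁻ s, ENNReal.ofReal (d s ^ p) ∂μ) < ENNReal.ofReal ((((4:ℝ)⁻¹) ^ k) ^ p)) :
    μ {s | ((2:ℝ)⁻¹) ^ k ≤ d s} ≤ ENNReal.ofReal (((2:ℝ)⁻¹) ^ k) := by
  have hp0 : (0:ℝ) < p := zero_lt_one.trans_le hp
  set t : ℝ := ((2:ℝ)⁻¹) ^ k with ht
  have htpos : 0 < t := by positivity
  have ht1 : t ≤ 1 := pow_le_one₀ (by norm_num) (by norm_num)
  set ε : ℝ≥0∞ := ENNReal.ofReal (t ^ p) with hε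
  have hεpos : ε ≠ 0 := by
    simp only [hε, ne_eq, ENNReal.ofReal_eq_zero, not_le]
    positivity
  have hεtop : ε ≠ ⊤ := ENNReal.ofReal_ne_top
  have hsub : {s | t ≤ d s} ⊆ {s | ε ≤ ENNReal.ofReal (d s ^ p)} := by
    intro s hs
    exact ENNReal.ofReal_le_ofReal (Real.rpow_le_rpow htpos.le hs hp0.le)
  have cheb := mul_meas_ge_le_lintegral₀ ((hm.pow_const p).ennreal_ofReal) ε
  have h4 : (((4:ℝ)⁻¹) ^ k) ^ p = t ^ p * t ^ p := by
    rw [← Real.mul_rpow htpos.le htpos.le, ht, ← mul_pow]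
    norm_num
  have key : ε * μ {s | t ≤ d s} < ε * ENNReal.ofReal (t ^ p) := by
    calc ε * μ {s | t ≤ d s} ≤ ε * μ {s | ε ≤ ENNReal.ofReal (d s ^ p)} :=
          mul_le_mul_right (measure_mono hsub) ε
      _ ≤ ∫⁻ s, ENNReal.ofReal (d s ^ p) ∂μ := cheb
      _ < ENNReal.ofReal ((((4:ℝ)⁻¹) ^ k) ^ p) := hI
      _ = ε * ENNReal.ofReal (t ^ p) := by
          rw [h4, ENNReal.ofReal_mul (by positivity)]
  have hlt := (ENNReal.mul_lt_mul_iff_right hεpos hεtop).1 key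
  calc μ {s | t ≤ d s} ≤ ENNReal.ofReal (t ^ p) := hlt.le
    _ ≤ ENNReal.ofReal t := by
        apply ENNReal.ofReal_le_ofReal
        calc t ^ p ≤ t ^ (1:ℝ) := Real.rpow_le_rpow_of_exponent_ge htpos ht1 hp
          _ = t := Real.rpow_one t

theorem geom_tsum_ne_top : (∑' k : ℕ, ENNReal.ofReal (((2:ℝ)⁻¹) ^ k)) ≠ ⊤ := by
  have h : ∀ k : ℕ, ENNReal.ofReal (((2:ℝ)⁻¹) ^ k) = ENNReal.ofReal 2⁻¹ ^ k := by
    intro k; rw [ENNReal.ofReal_pow (by norm_num)]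
  rw [tsum_congr h, ENNReal.tsum_geometric]
  apply ENNReal.inv_ne_top.2
  rw [ne_eq, tsub_eq_zero_iff_le, not_le]
  rw [show ((2:ℝ)⁻¹) = 1/2 by norm_num]
  exact ENNReal.ofReal_lt_one.2 (by norm_num)

end ENNRealHelpers

/-- The `L^p`-fiber space `L^p(Ω,(X_s)_{s∈Ω})` over a measurable Banach fiber
bundle is a Banach space with the `L^p`-fiber norm `‖f‖_p = (∫ ‖f(s)‖_s^p dμ)^{1/p}`: the fiber
`p`-integrable functions form a vector space, the fiber norm satisfies the norm axioms (modulo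
`μ`-a.e. equality), and the space is complete. -/
theorem lp_fiber_space_is_banach
    {Ω : Type*} [MeasurableSpace Ω] {μ : Measure Ω} [SigmaFinite μ]
    {Xf : Ω → Type*} [∀ s, NormedAddCommGroup (Xf s)] [∀ s, NormedSpace ℂ (Xf s)]
    [∀ s, CompleteSpace (Xf s)]
    (b : ℕ → ∀ s, Xf s) (hb : IsFiberBasis b)
    (p : ℝ) (hp : 1 ≤ p) :
    -- the fiber `p`-integrable functions form a vector space
    (∀ f g : ∀ s, Xf s, FiberPIntegrable μ b p f → FiberPIntegrable μ b p g →
      FiberPIntegrable μ b p (fun s => f s + g s)) ∧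
    (∀ (c : ℂ) (f : ∀ s, Xf s), FiberPIntegrable μ b p f →
      FiberPIntegrable μ b p (fun s => c • f s)) ∧
    -- the `L^p`-fiber norm is a norm on the space of equivalence classes:
    -- triangle inequality, absolute homogeneity, and definiteness up to `μ`-a.e. equality
    (∀ f g : ∀ s, Xf s, FiberPIntegrable μ b p f → FiberPIntegrable μ b p g →
      (∫⁻ s, ENNReal.ofReal (‖f s + g s‖ ^ p) ∂μ) ^ (1 / p)
        ≤ (∫⁻ s, ENNReal.ofReal (‖f s‖ ^ p) ∂μ) ^ (1 / p)
          + (∫⁻ s, ENNReal.ofReal (‖g s‖ ^ p) ∂μ) ^ (1 / p)) ∧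
    (∀ (c : ℂ) (f : ∀ s, Xf s), FiberPIntegrable μ b p f →
      (∫⁻ s, ENNReal.ofReal (‖c • f s‖ ^ p) ∂μ) ^ (1 / p)
        = ENNReal.ofReal ‖c‖ * (∫⁻ s, ENNReal.ofReal (‖f s‖ ^ p) ∂μ) ^ (1 / p)) ∧
    (∀ f : ∀ s, Xf s, FiberPIntegrable μ b p f →
      ((∫⁻ s, ENNReal.ofReal (‖f s‖ ^ p) ∂μ) = 0 ↔ ∀ᵐ s ∂μ, f s = 0)) ∧
    -- completeness: every Cauchy sequence for the `L^p`-fiber norm converges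
    ∀ F : ℕ → ∀ s, Xf s, (∀ n, FiberPIntegrable μ b p (F n)) →
      (∀ ε : ℝ, 0 < ε → ∃ N₀ : ℕ, ∀ m n : ℕ, N₀ ≤ m → N₀ ≤ n →
        (∫⁻ s, ENNReal.ofReal (‖F m s - F n s‖ ^ p) ∂μ) < ENNReal.ofReal (ε ^ p)) →
      ∃ f : ∀ s, Xf s, FiberPIntegrable μ b p f ∧
        Tendsto (fun n => ∫⁻ s, ENNReal.ofReal (‖F n s - f s‖ ^ p) ∂μ) atTop (nhds 0) := by
  classical
  obtain ⟨hb1, ⟨k₀, hk₀⟩, hbadd', hbsm', hb5⟩ := hb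
  choose badd hbadd using hbadd'
  choose bsm hbsm using hbsm'
  have hp0 : (0:ℝ) < p := zero_lt_one.trans_le hp
  set bsub : ℕ → ℕ → ℕ := fun k l => badd k (bsm (-1) 0 l) with hbsub_def
  have hbsub : ∀ k l s, b (bsub k l) s = b k s - b l s := by
    intro k l s
    rw [hbsub_def]
    rw [hbadd, hbsm]
    norm_num [← sub_eq_add_neg]
  have hnorm : ∀ {f : ∀ s, Xf s}, FiberMeasurable μ b f →
      AEMeasurable (fun s => ‖f s‖) μ :=
    fun hf => fm_norm_aemeasurable hb1 hk₀ hbsub hf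
  have hsub : ∀ {f g : ∀ s, Xf s}, FiberMeasurable μ b f → FiberMeasurable μ b g →
      FiberMeasurable μ b (fun s => f s - g s) := by
    intro f g hf hg
    have h1 := FiberMeasurable.add' hbadd hf (FiberMeasurable.smul' hbsm (-1) hg)
    have he : (fun s => f s + (-1:ℂ) • g s) = fun s => f s - g s :=
      funext fun s => by rw [neg_one_smul, ← sub_eq_add_neg]
    rwa [he] at h1
  -- Part 1: closure under addition
  have part1 : ∀ f g : ∀ s, Xf s, FiberPIntegrable μ b p f → FiberPIntegrable μ b p g →
      FiberPIntegrable μ b p (fun s => f s + g s) := by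
    intro f g hf hg
    exact ⟨FiberMeasurable.add' hbadd hf.1 hg.1,
      lint_rpow_add_lt_top f g hp0.le (hnorm hf.1) hf.2 hg.2⟩
  -- Part 2: closure under scalar multiplication
  have hsm_eq : ∀ (c : ℂ) (f : ∀ s, Xf s) (s : Ω), ENNReal.ofReal (‖c • f s‖ ^ p)
      = ENNReal.ofReal (‖c‖ ^ p) * ENNReal.ofReal (‖f s‖ ^ p) := by
    intro c f s
    rw [norm_smul, Real.mul_rpow (norm_nonneg _) (norm_nonneg _),
      ENNReal.ofReal_mul (by positivity)]
  have part2 : ∀ (c : ℂ) (f : ∀ s, Xf s), FiberPIntegrable μ b p f →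
      FiberPIntegrable μ b p (fun s => c • f s) := by
    intro c f hf
    refine ⟨FiberMeasurable.smul' hbsm c hf.1, ?_⟩
    calc (∫⁻ s, ENNReal.ofReal (‖c • f s‖ ^ p) ∂μ)
        = ENNReal.ofReal (‖c‖ ^ p) * ∫⁻ s, ENNReal.ofReal (‖f s‖ ^ p) ∂μ := by
          simp only [hsm_eq c f]
          exact lintegral_const_mul' _ _ ENNReal.ofReal_ne_top
      _ < ⊤ := ENNReal.mul_lt_top ENNReal.ofReal_lt_top hf.2
  refine ⟨part1, part2, ?_, ?_, ?_, ?_⟩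
  -- Part 3: triangle inequality
  · intro f g hf hg
    have hF : AEMeasurable (fun s => ENNReal.ofReal ‖f s‖) μ :=
      ENNReal.measurable_ofReal.comp_aemeasurable (hnorm hf.1)
    have hG : AEMeasurable (fun s => ENNReal.ofReal ‖g s‖) μ :=
      ENNReal.measurable_ofReal.comp_aemeasurable (hnorm hg.1)
    have key := ENNReal.lintegral_Lp_add_le hF hG hp
    simp only [Pi.add_apply] at key
    calc (∫⁻ s, ENNReal.ofReal (‖f s + g s‖ ^ p) ∂μ) ^ (1 / p)
        ≤ (∫⁻ s, (ENNReal.ofReal ‖f s‖ + ENNReal.ofReal ‖g s‖) ^ p ∂μ) ^ (1 / p) := by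
          apply ENNReal.rpow_le_rpow _ (by positivity)
          apply lintegral_mono
          intro s
          show ENNReal.ofReal (‖f s + g s‖ ^ p)
            ≤ (ENNReal.ofReal ‖f s‖ + ENNReal.ofReal ‖g s‖) ^ p
          rw [ofReal_norm_rpow _ hp0.le]
          apply ENNReal.rpow_le_rpow _ hp0.le
          rw [← ENNReal.ofReal_add (norm_nonneg _) (norm_nonneg _)]
          exact ENNReal.ofReal_le_ofReal (norm_add_le _ _)
      _ ≤ (∫⁻ s, ENNReal.ofReal ‖f s‖ ^ p ∂μ) ^ (1 / p)
          + (∫⁻ s, ENNReal.ofReal ‖g s‖ ^ p ∂μ) ^ (1 / p) := key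
      _ = (∫⁻ s, ENNReal.ofReal (‖f s‖ ^ p) ∂μ) ^ (1 / p)
          + (∫⁻ s, ENNReal.ofReal (‖g s‖ ^ p) ∂μ) ^ (1 / p) := by
          simp only [fun s : Ω => ofReal_norm_rpow (f s) hp0.le,
            fun s : Ω => ofReal_norm_rpow (g s) hp0.le]
  -- Part 4: homogeneity
  · intro c f _
    simp only [hsm_eq c f]
    rw [lintegral_const_mul' _ _ ENNReal.ofReal_ne_top,
      ENNReal.mul_rpow_of_nonneg _ _ (by positivity)]
    congr 1
    rw [← ENNReal.ofReal_rpow_of_nonneg (norm_nonneg c) hp0.le, ← ENNReal.rpow_mul,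
      mul_one_div_cancel hp0.ne', ENNReal.rpow_one]
  -- Part 5: definiteness
  · intro f hf
    rw [lintegral_eq_zero_iff' (((hnorm hf.1).pow_const p).ennreal_ofReal)]
    constructor
    · intro h
      filter_upwards [h] with s hs
      simp only [Pi.zero_apply, ENNReal.ofReal_eq_zero] at hs
      have h0 : ‖f s‖ ^ p = 0 := le_antisymm hs (by positivity)
      rw [Real.rpow_eq_zero (norm_nonneg _) hp0.ne'] at h0
      exact norm_eq_zero.1 h0
    · intro h
      filter_upwards [h] with s hs
      simp [hs, Real.zero_rpow hp0.ne']
  -- Part 6: completeness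
  · intro F hFint hcauchy
    have hFfm : ∀ m, FiberMeasurable μ b (F m) := fun m => (hFint m).1
    have hsubfm : ∀ m m', FiberMeasurable μ b (fun s => F m s - F m' s) :=
      fun m m' => hsub (hFfm m) (hFfm m')
    have hdn : ∀ m m', AEMeasurable (fun s => ‖F m s - F m' s‖) μ :=
      fun m m' => hnorm (hsubfm m m')
    have hdive : ∀ m m',
        AEMeasurable (fun s => ENNReal.ofReal (‖F m s - F m' s‖ ^ p)) μ :=
      fun m m' => ((hdn m m').pow_const p).ennreal_ofReal
    -- choose a rapidly Cauchy subsequence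
    have hc : ∀ k : ℕ, ∃ N₀ : ℕ, ∀ m m', N₀ ≤ m → N₀ ≤ m' →
        (∫⁻ s, ENNReal.ofReal (‖F m s - F m' s‖ ^ p) ∂μ)
          < ENNReal.ofReal ((((4:ℝ)⁻¹) ^ k) ^ p) := by
      intro k
      obtain ⟨N₀, hN₀⟩ := hcauchy (((4:ℝ)⁻¹) ^ k) (by positivity)
      exact ⟨N₀, hN₀⟩
    choose G hG using hc
    set n : ℕ → ℕ := fun k =>
      Nat.rec (motive := fun _ => ℕ) (G 0) (fun k ih => max (ih + 1) (G (k + 1))) k with hn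
    have hnsucc : ∀ k, n (k + 1) = max (n k + 1) (G (k + 1)) := fun k => rfl
    have hnmono : StrictMono n := strictMono_nat_of_lt_succ (fun k => by
      rw [hnsucc]
      exact lt_of_lt_of_le (Nat.lt_succ_self _) (le_max_left _ _))
    have hnG : ∀ k, G k ≤ n k := by
      intro k
      cases k with
      | zero => exact le_rfl
      | succ k => rw [hnsucc]; exact le_max_right _ _
    have hdiff : ∀ k, (∫⁻ s, ENNReal.ofReal (‖F (n (k+1)) s - F (n k) s‖ ^ p) ∂μ)
        < ENNReal.ofReal ((((4:ℝ)⁻¹) ^ k) ^ p) :=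
      fun k => hG k _ _ ((hnG k).trans (hnmono.monotone (Nat.le_succ k))) (hnG k)
    -- Borel–Cantelli
    set A : ℕ → Set Ω := fun k => {s | ((2:ℝ)⁻¹) ^ k ≤ ‖F (n (k+1)) s - F (n k) s‖} with hA_def
    have hA : ∀ k, μ (A k) ≤ ENNReal.ofReal (((2:ℝ)⁻¹) ^ k) := fun k =>
      cheb_estimate _ (fun s => norm_nonneg _) hp k (hdn (n (k+1)) (n k)) (hdiff k)
    have hBC : ∀ᵐ s ∂μ, {k | s ∈ A k}.Finite :=
      ae_finite_setOf_mem (ne_top_of_le_ne_top geom_tsum_ne_top (ENNReal.tsum_le_tsum hA))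
    -- a.e. existence of the limit
    have hlim0 : ∀ᵐ s ∂μ, ∃ x : Xf s, Tendsto (fun k => F (n k) s) atTop (nhds x) := by
      filter_upwards [hBC] with s hs
      obtain ⟨K, hK⟩ : ∃ K, ∀ k, K ≤ k → s ∉ A k := by
        obtain ⟨K, hK⟩ := hs.bddAbove
        exact ⟨K + 1, fun k hk hA => by have := hK hA; omega⟩
      apply cauchySeq_tendsto_of_complete
      apply cauchySeq_of_summable_dist
      rw [← summable_nat_add_iff K]
      refine Summable.of_nonneg_of_le (fun k => dist_nonneg) (fun k => ?_)
        ((summable_nat_add_iff K).2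
          (summable_geometric_of_lt_one (r := (2:ℝ)⁻¹) (by norm_num) (by norm_num)))
      rw [dist_eq_norm']
      exact (lt_of_not_ge (hK (k + K) (Nat.le_add_left K k))).le
    set f : ∀ s, Xf s := fun s =>
      if h : ∃ x : Xf s, Tendsto (fun k => F (n k) s) atTop (nhds x) then h.choose else 0
      with hf_def
    have hfl : ∀ᵐ s ∂μ, Tendsto (fun k => F (n k) s) atTop (nhds (f s)) := by
      filter_upwards [hlim0] with s hs
      show Tendsto _ _ (nhds (dite _ _ _))
      rw [dif_pos hs]
      exact hs.choose_spec
    have hffm : FiberMeasurable μ b f :=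
      fiberMeasurable_of_tendsto hb1 hbsub hb5 (fun k => hFfm (n k)) hfl
    -- Fatou-type bound
    have hconv : ∀ (m : ℕ) (ε : ℝ≥0∞),
        (∀ᶠ k in atTop, (∫⁻ s, ENNReal.ofReal (‖F m s - F (n k) s‖ ^ p) ∂μ) ≤ ε) →
        (∫⁻ s, ENNReal.ofReal (‖F m s - f s‖ ^ p) ∂μ) ≤ ε := by
      intro m ε hev
      have heq : (∫⁻ s, ENNReal.ofReal (‖F m s - f s‖ ^ p) ∂μ)
          = ∫⁻ s, liminf (fun k => ENNReal.ofReal (‖F m s - F (n k) s‖ ^ p)) atTop ∂μ := by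
        apply lintegral_congr_ae
        filter_upwards [hfl] with s hs
        have h1 : Tendsto (fun k => ‖F m s - F (n k) s‖) atTop (nhds ‖F m s - f s‖) :=
          (tendsto_const_nhds.sub hs).norm
        have h2 : Tendsto (fun k => ‖F m s - F (n k) s‖ ^ p) atTop
            (nhds (‖F m s - f s‖ ^ p)) :=
          (Real.continuousAt_rpow_const _ p (Or.inr hp0.le)).tendsto.comp h1
        have h3 := (ENNReal.continuous_ofReal.tendsto _).comp h2
        exact h3.liminf_eq.symm
      rw [heq]
      refine (lintegral_liminf_le' (fun k => hdive m (n k))).trans ?_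
      exact liminf_le_of_frequently_le' hev.frequently
    -- f is p-integrable
    have hf0 : (∫⁻ s, ENNReal.ofReal (‖F (n 0) s - f s‖ ^ p) ∂μ)
        ≤ ENNReal.ofReal ((((4:ℝ)⁻¹) ^ 0) ^ p) := by
      apply hconv
      filter_upwards with k
      exact (hG 0 _ _ (hnG 0) ((hnG 0).trans (hnmono.monotone (Nat.zero_le k)))).le
    have hfint : (∫⁻ s, ENNReal.ofReal (‖f s‖ ^ p) ∂μ) < ⊤ := by
      have he : (fun s => ENNReal.ofReal (‖f s‖ ^ p))
          = fun s => ENNReal.ofReal (‖(f s - F (n 0) s) + F (n 0) s‖ ^ p) := by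
        funext s; rw [sub_add_cancel]
      rw [he]
      apply lint_rpow_add_lt_top _ _ hp0.le (hnorm (hsub hffm (hFfm (n 0))))
      · have he2 : (fun s => ENNReal.ofReal (‖f s - F (n 0) s‖ ^ p))
            = fun s => ENNReal.ofReal (‖F (n 0) s - f s‖ ^ p) := by
          funext s; rw [norm_sub_rev]
        rw [he2]
        exact lt_of_le_of_lt hf0 ENNReal.ofReal_lt_top
      · exact (hFint (n 0)).2
    refine ⟨f, ⟨hffm, hfint⟩, ?_⟩
    -- convergence in the L^p fiber norm
    rw [ENNReal.tendsto_atTop_zero]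
    intro ε hε
    set ε' : ℝ≥0∞ := min ε 1 with hε'
    have hε'0 : ε' ≠ 0 := (lt_min hε zero_lt_one).ne'
    have hε'top : ε' ≠ ⊤ := (lt_of_le_of_lt (min_le_right ε 1) ENNReal.one_lt_top).ne
    set δ : ℝ := ε'.toReal ^ p⁻¹ with hδ
    have hδpos : 0 < δ :=
      Real.rpow_pos_of_pos (ENNReal.toReal_pos hε'0 hε'top) _
    have hδp : ENNReal.ofReal (δ ^ p) = ε' := by
      rw [hδ, ← Real.rpow_mul ENNReal.toReal_nonneg, inv_mul_cancel₀ hp0.ne',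
        Real.rpow_one, ENNReal.ofReal_toReal hε'top]
    obtain ⟨N₀, hN₀⟩ := hcauchy δ hδpos
    refine ⟨N₀, fun m hm => ?_⟩
    have hle : (∫⁻ s, ENNReal.ofReal (‖F m s - f s‖ ^ p) ∂μ) ≤ ε' := by
      apply hconv
      rw [eventually_atTop]
      refine ⟨N₀, fun k hk => ?_⟩
      have hnk : N₀ ≤ n k := hk.trans hnmono.le_apply
      rw [← hδp]
      exact (hN₀ m (n k) hm hnk).le
    exact hle.trans (min_le_left ε 1)
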